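/- arXiv:1805.04606 — 3 statements merged into one kernel-verified Lean document; each statement's English description precedes it below -/
import Mathlib

section
/- (Open-loop feasibility transfer, deterministic core of Remark 2) Let F ∈ ℝ^(c×s), G_w ∈ ℝ^(s×q), and let d ∈ ℝ^s be a fixed vector (representing G_x x_0 + G_u V). Let W^(1), …, W^(N̂) ∈ ℝ^q be the truncated samples and let 𝕎_N ⊆ ℝ^q be a finite set of samples containing them. Define X(W) = d + G_w W and suppose ε ∈ ℝ^c with ε ≥ 0 satisfies: for every W ∈ 𝕎_N there exist convex coefficients α ∈ ℂ such that for every row k, |(F G_w W − Σ_{i=1}^{N̂} α_i F G_w W^(i))_k| ≤ ε_k. If the buffered constraints F X(W^(i)) ≤ 1 − ε hold componentwise for all i = 1,…,N̂, then the original constraints F X(W) ≤ 1 hold componentwise for every W ∈ 𝕎_N. -/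
open Matrix

/-- Open-loop feasibility transfer (deterministic core of Remark 2): with
`X(W) = d + G_w W`, if every sample `W ∈ 𝕎_N` is, after the uncertainty mapping
`F G_w`, componentwise within `ε` of a convex combination of the truncated
samples `W⁽ⁱ⁾`, and the buffered constraints `F X(W⁽ⁱ⁾) ≤ 1 − ε` hold, then the
original constraints `F X(W) ≤ 1` hold for every `W ∈ 𝕎_N`. -/
theorem open_loop_feasibility_transfer
    (c s q Nhat : ℕ) (hNhat : 0 < Nhat)
    (F : Matrix (Fin c) (Fin s) ℝ) (Gw : Matrix (Fin s) (Fin q) ℝ)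
    (d : Fin s → ℝ)
    (Wsamp : Fin Nhat → Fin q → ℝ) (WN : Finset (Fin q → ℝ))
    (hWsub : ∀ i, Wsamp i ∈ WN)
    (X : (Fin q → ℝ) → Fin s → ℝ) (hX : ∀ W, X W = d + Gw.mulVec W)
    (ε : Fin c → ℝ) (hε : ∀ k, 0 ≤ ε k)
    (happrox : ∀ W ∈ WN, ∃ α : Fin Nhat → ℝ,
      (∀ i, 0 ≤ α i) ∧ (∑ i, α i = 1) ∧
      ∀ k : Fin c,
        |(F.mulVec (Gw.mulVec W) -
            ∑ i, α i • F.mulVec (Gw.mulVec (Wsamp i))) k| ≤ ε k)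
    (hbuf : ∀ (i : Fin Nhat) (k : Fin c), F.mulVec (X (Wsamp i)) k ≤ 1 - ε k) :
    ∀ W ∈ WN, ∀ k : Fin c, F.mulVec (X W) k ≤ 1 := by
  intro W hW k
  obtain ⟨α, h0, h1, hk⟩ := happrox W hW
  have habs := (abs_le.mp (hk k)).2
  simp only [Pi.sub_apply] at habs
  have hsplit : ∀ v, F.mulVec (X v) k = F.mulVec d k + F.mulVec (Gw.mulVec v) k := by
    intro v; rw [hX, Matrix.mulVec_add]; rfl
  have hbound : (∑ i, α i • F.mulVec (Gw.mulVec (Wsamp i))) k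
      ≤ 1 - ε k - F.mulVec d k := by
    have heq : (∑ i, α i • F.mulVec (Gw.mulVec (Wsamp i))) k
        = ∑ i, α i * F.mulVec (Gw.mulVec (Wsamp i)) k := by
      simp [Finset.sum_apply]
    rw [heq]
    calc ∑ i, α i * F.mulVec (Gw.mulVec (Wsamp i)) k
        ≤ ∑ i, α i * (1 - ε k - F.mulVec d k) := by
          refine Finset.sum_le_sum fun i _ => mul_le_mul_of_nonneg_left ?_ (h0 i)
          have := hbuf i k
          rw [hsplit (Wsamp i)] at this
          linarith
      _ = (∑ i, α i) * (1 - ε k - F.mulVec d k) := by rw [Finset.sum_mul]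
      _ = 1 - ε k - F.mulVec d k := by rw [h1, one_mul]
  have := hsplit W
  linarith
end

section
/- (Closed-loop state feasibility transfer; deterministic core of Theorem 1 for state constraints) Let F ∈ ℝ^(c×s), G_u ∈ ℝ^(s×r), G_w ∈ ℝ^(s×q), K ∈ ℝ^(r×q), and d ∈ ℝ^s (representing G_x x_0 + G_u V). Define X(W) = d + (G_u K + G_w) W. Suppose there are a matrix H ∈ ℝ^(z×q) and, for each row k of F, a vector κ_k ∈ ℝ^z such that row k of F G_u K equals κ_kᵀ H. Let W^(1), …, W^(N̂) ∈ ℝ^q be the truncated samples and 𝕎_N ⊇ {W^(1),…,W^(N̂)} a finite sample set. Assume ε_cl ≥ 0 and ε_ol ∈ ℝ^c with ε_ol ≥ 0 satisfy: for every W ∈ 𝕎_N there exist convex coefficients α ∈ ℂ with ‖H (W − Σ_i α_i W^(i))‖_∞ ≤ ε_cl and, for every row k, |(F G_w (W − Σ_i α_i W^(i)))_k| ≤ (ε_ol)_k. If the buffered constraints (F X(W^(i)))_k ≤ 1 − ‖κ_k‖_1 · ε_cl − (ε_ol)_k hold for all i = 1,…,N̂ and all rows k, then the original constraints F X(W) ≤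 1 hold componentwise for every W ∈ 𝕎_N. -/
open Matrix

/-- Closed-loop state feasibility transfer (deterministic core of Theorem 1 for
state constraints): with `X(W) = d + (G_u K + G_w) W`, a reordering of each row
of `F G_u K` as `κ_kᵀ H`, and truncation errors bounded by `ε_cl` and `ε_ol`,
the buffered constraints `(F X(W⁽ⁱ⁾))_k ≤ 1 − ‖κ_k‖₁ ε_cl − (ε_ol)_k` on the
truncated samples imply the original constraints `F X(W) ≤ 1` on all samples. -/
theorem closed_loop_state_feasibility_transfer
    (c s r q z Nhat : ℕ) (hNhat : 0 < Nhat)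
    (F : Matrix (Fin c) (Fin s) ℝ) (Gu : Matrix (Fin s) (Fin r) ℝ)
    (Gw : Matrix (Fin s) (Fin q) ℝ) (K : Matrix (Fin r) (Fin q) ℝ)
    (d : Fin s → ℝ)
    (X : (Fin q → ℝ) → Fin s → ℝ)
    (hX : ∀ W, X W = d + (Gu * K + Gw).mulVec W)
    (H : Matrix (Fin z) (Fin q) ℝ) (κ : Fin c → Fin z → ℝ)
    (hreorder : ∀ k : Fin c, (F * Gu * K) k = Matrix.vecMul (κ k) H)
    (Wsamp : Fin Nhat → Fin q → ℝ) (WN : Finset (Fin q → ℝ))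
    (hWsub : ∀ i, Wsamp i ∈ WN)
    (εcl : ℝ) (hεcl : 0 ≤ εcl) (εol : Fin c → ℝ) (hεol : ∀ k, 0 ≤ εol k)
    (happrox : ∀ W ∈ WN, ∃ α : Fin Nhat → ℝ,
      (∀ i, 0 ≤ α i) ∧ (∑ i, α i = 1) ∧
      ‖H.mulVec (W - ∑ i, α i • Wsamp i)‖ ≤ εcl ∧
      ∀ k : Fin c, |((F * Gw).mulVec (W - ∑ i, α i • Wsamp i)) k| ≤ εol k)
    (hbuf : ∀ (i : Fin Nhat) (k : Fin c),
      F.mulVec (X (Wsamp i)) k ≤ 1 - (∑ t, |κ k t|) * εcl - εol k) :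
    ∀ W ∈ WN, ∀ k : Fin c, F.mulVec (X W) k ≤ 1 := by
  intro W hW k
  obtain ⟨α, hα0, hα1, hHb, hGwb⟩ := happrox W hW
  set M := Gu * K + Gw with hM
  set Δ := W - ∑ i, α i • Wsamp i with hΔ
  have hfx : ∀ V, F.mulVec (X V) k = F.mulVec d k + (F * M).mulVec V k := by
    intro V
    rw [hX, Matrix.mulVec_add, ← Matrix.mulVec_mulVec]
    rfl
  have hsum : (F * M).mulVec (∑ i, α i • Wsamp i) = ∑ i, α i • (F * M).mulVec (Wsamp i) := by
    have := map_sum ((F * M).mulVecLin) (fun i => α i • Wsamp i) Finset.univ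
    simp only [Matrix.mulVecLin_apply, Matrix.mulVec_smul] at this
    exact this
  have key : F.mulVec (X W) k
      = (∑ i, α i * F.mulVec (X (Wsamp i)) k) + (F * M).mulVec Δ k := by
    have hW' : W = Δ + ∑ i, α i • Wsamp i := by
      rw [hΔ]; ring
    calc F.mulVec (X W) k
        = F.mulVec d k + (F * M).mulVec W k := hfx W
      _ = F.mulVec d k + ((F * M).mulVec Δ k + (F * M).mulVec (∑ i, α i • Wsamp i) k) := by
          rw [hW', Matrix.mulVec_add]; rfl
      _ = (∑ i, α i * F.mulVec (X (Wsamp i)) k) + (F * M).mulVec Δ k := by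
          have : ∑ i, α i * F.mulVec (X (Wsamp i)) k
              = F.mulVec d k + (F * M).mulVec (∑ i, α i • Wsamp i) k := by
            simp only [hfx, mul_add, Finset.sum_add_distrib, ← Finset.sum_mul, hα1, one_mul,
              hsum, Finset.sum_apply, Pi.smul_apply, smul_eq_mul]
          rw [this]; ring
  have hsplit : (F * M).mulVec Δ k = (F * Gu * K).mulVec Δ k + (F * Gw).mulVec Δ k := by
    rw [hM, Matrix.mul_add, Matrix.add_mulVec, Matrix.mul_assoc]
    rfl
  have h1 : (F * Gu * K).mulVec Δ k ≤ (∑ t, |κ k t|) * εcl := by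
    have : (F * Gu * K).mulVec Δ k = ∑ t, κ k t * (H.mulVec Δ) t := by
      show (F * Gu * K) k ⬝ᵥ Δ = _
      rw [hreorder k, ← Matrix.dotProduct_mulVec]
      rfl
    rw [this, Finset.sum_mul]
    apply Finset.sum_le_sum
    intro t _
    calc κ k t * (H.mulVec Δ) t ≤ |κ k t * (H.mulVec Δ) t| := le_abs_self _
      _ = |κ k t| * |(H.mulVec Δ) t| := abs_mul _ _
      _ ≤ |κ k t| * εcl := by
          apply mul_le_mul_of_nonneg_left _ (abs_nonneg _)
          exact le_trans (norm_le_pi_norm (H.mulVec Δ) t) hHb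
  have h2 : (F * Gw).mulVec Δ k ≤ εol k := le_trans (le_abs_self _) (hGwb k)
  have h3 : ∑ i, α i * F.mulVec (X (Wsamp i)) k
      ≤ 1 - (∑ t, |κ k t|) * εcl - εol k := by
    calc ∑ i, α i * F.mulVec (X (Wsamp i)) k
        ≤ ∑ i, α i * (1 - (∑ t, |κ k t|) * εcl - εol k) := by
          exact Finset.sum_le_sum fun i _ =>
            mul_le_mul_of_nonneg_left (hbuf i k) (hα0 i)
      _ = 1 - (∑ t, |κ k t|) * εcl - εol k := by
          rw [← Finset.sum_mul, hα1, one_mul]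
  rw [key, hsplit]
  linarith
end

section
/- (Closed-loop input feasibility transfer; deterministic core of Theorem 1 for input constraints) Let F_u ∈ ℝ^(c×r), K ∈ ℝ^(r×q), V ∈ ℝ^r, and define U(W) = K W + V. Suppose there are a matrix H_u ∈ ℝ^(z×q) and, for each row k of F_u, a vector κ_k ∈ ℝ^z such that row k of F_u K equals κ_kᵀ H_u. Let W^(1), …, W^(N̂) ∈ ℝ^q be the truncated samples and 𝕎_N ⊇ {W^(1),…,W^(N̂)} a finite sample set. Assume ε_u ≥ 0 satisfies: for every W ∈ 𝕎_N there exist convex coefficients α ∈ ℂ with ‖H_u (W − Σ_i α_i W^(i))‖_∞ ≤ ε_u. If the buffered input constraints (F_u U(W^(i)))_k ≤ 1 − ‖κ_k‖_1 · ε_u hold for all i = 1,…,N̂ and all rows k, then the original input constraints F_u U(W) ≤ 1 hold componentwise for every W ∈ 𝕎_N. -/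
open Matrix

/-- Closed-loop input feasibility transfer (deterministic core of Theorem 1 for
input constraints): with `U(W) = K W + V`, a reordering of each row of `F_u K`
as `κ_kᵀ H_u`, and truncation error bounded by `ε_u`, the buffered input
constraints `(F_u U(W⁽ⁱ⁾))_k ≤ 1 − ‖κ_k‖₁ ε_u` on the truncated samples imply
the original input constraints `F_u U(W) ≤ 1` on all samples. -/
theorem closed_loop_input_feasibility_transfer
    (c r q z Nhat : ℕ) (hNhat : 0 < Nhat)
    (Fu : Matrix (Fin c) (Fin r) ℝ) (K : Matrix (Fin r) (Fin q) ℝ)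
    (V : Fin r → ℝ)
    (U : (Fin q → ℝ) → Fin r → ℝ) (hU : ∀ W, U W = K.mulVec W + V)
    (Hu : Matrix (Fin z) (Fin q) ℝ) (κ : Fin c → Fin z → ℝ)
    (hreorder : ∀ k : Fin c, (Fu * K) k = Matrix.vecMul (κ k) Hu)
    (Wsamp : Fin Nhat → Fin q → ℝ) (WN : Finset (Fin q → ℝ))
    (hWsub : ∀ i, Wsamp i ∈ WN)
    (εu : ℝ) (hεu : 0 ≤ εu)
    (happrox : ∀ W ∈ WN, ∃ α : Fin Nhat → ℝ,
      (∀ i, 0 ≤ α i) ∧ (∑ i, α i = 1) ∧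
      ‖Hu.mulVec (W - ∑ i, α i • Wsamp i)‖ ≤ εu)
    (hbuf : ∀ (i : Fin Nhat) (k : Fin c),
      Fu.mulVec (U (Wsamp i)) k ≤ 1 - (∑ t, |κ k t|) * εu) :
    ∀ W ∈ WN, ∀ k : Fin c, Fu.mulVec (U W) k ≤ 1 := by

  intro W hW k
  obtain ⟨α, hα0, hα1, hαe⟩ := happrox W hW
  set u : Fin q → ℝ := Matrix.vecMul (κ k) Hu with hu
  have key : ∀ X : Fin q → ℝ, Fu.mulVec (U X) k = u ⬝ᵥ X + Fu.mulVec V k := by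
    intro X
    rw [hU, Matrix.mulVec_add, Pi.add_apply, Matrix.mulVec_mulVec]
    congr 1
    show (Fu * K) k ⬝ᵥ X = u ⬝ᵥ X
    rw [hreorder k]
  set e : Fin q → ℝ := W - ∑ i, α i • Wsamp i with he
  have hdot : u ⬝ᵥ e = κ k ⬝ᵥ Hu.mulVec e := (Matrix.dotProduct_mulVec _ _ _).symm
  have hbound : |u ⬝ᵥ e| ≤ (∑ t, |κ k t|) * εu := by
    rw [hdot]
    calc |κ k ⬝ᵥ Hu.mulVec e| ≤ ∑ t, |κ k t * Hu.mulVec e t| :=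
          Finset.abs_sum_le_sum_abs _ _
      _ ≤ ∑ t, |κ k t| * εu := by
          apply Finset.sum_le_sum
          intro t _
          rw [abs_mul]
          apply mul_le_mul_of_nonneg_left _ (abs_nonneg _)
          calc |Hu.mulVec e t| ≤ ‖Hu.mulVec e‖ := by
                simpa using norm_le_pi_norm (Hu.mulVec e) t
            _ ≤ εu := hαe
      _ = (∑ t, |κ k t|) * εu := (Finset.sum_mul _ _ _).symm
  have hdecomp : u ⬝ᵥ W = (∑ i, α i * (u ⬝ᵥ Wsamp i)) + u ⬝ᵥ e := by
    have : u ⬝ᵥ e = u ⬝ᵥ W - ∑ i, α i * (u ⬝ᵥ Wsamp i) := by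
      rw [he, dotProduct_sub]
      congr 1
      simp [dotProduct, Finset.mul_sum, Finset.sum_comm (γ := Fin q)]
      apply Finset.sum_congr rfl
      intro i _
      apply Finset.sum_congr rfl
      intro t _
      ring
    rw [this]; ring
  have hmain : Fu.mulVec (U W) k
      = (∑ i, α i * Fu.mulVec (U (Wsamp i)) k) + u ⬝ᵥ e := by
    rw [key, hdecomp]
    have : ∑ i, α i * Fu.mulVec (U (Wsamp i)) k
        = (∑ i, α i * (u ⬝ᵥ Wsamp i)) + (∑ i, α i) * Fu.mulVec V k := by
      rw [Finset.sum_mul, ← Finset.sum_add_distrib]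
      apply Finset.sum_congr rfl
      intro i _
      rw [key]; ring
    rw [this, hα1]; ring
  rw [hmain]
  have h1 : ∑ i, α i * Fu.mulVec (U (Wsamp i)) k ≤ 1 - (∑ t, |κ k t|) * εu := by
    calc ∑ i, α i * Fu.mulVec (U (Wsamp i)) k
        ≤ ∑ i, α i * (1 - (∑ t, |κ k t|) * εu) :=
          Finset.sum_le_sum fun i _ => mul_le_mul_of_nonneg_left (hbuf i k) (hα0 i)
      _ = 1 - (∑ t, |κ k t|) * εu := by rw [← Finset.sum_mul, hα1, one_mul]
  have h2 : u ⬝ᵥ e ≤ (∑ t, |κ k t|) * εu := le_trans (le_abs_self _) hbound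
  linarith
end
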